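/- Let $c>0$, $\tau\ge 0$, $a_-<0$, $b_-<0$ and let $\lambda_1>0$ be the unique positive real zero of $\chi_-(z)=z^2-cz+a_-+b_-e^{-zc\tau}$. Then every complex zero $\lambda$ of $\chi_-$ with $\lambda\ne\lambda_1$ satisfies $\mathrm{Re}\,\lambda<\lambda_1$. -/

import Mathlib

/-- The unique positive real zero `λ₁` of `χ₋` is dominating: every other complex
zero `λ` of `χ₋` satisfies `Re λ < λ₁`. -/
theorem chi_minus_dominating_zero (c τ a b lam₁ : ℝ) (hc : 0 < c) (hτ : 0 ≤ τ)
    (ha : a < 0) (hb : b < 0) (hlam₁pos : 0 < lam₁)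
    (hzero : lam₁ ^ 2 - c * lam₁ + a + b * Real.exp (-(lam₁ * (c * τ))) = 0)
    (huniq : ∀ x : ℝ, 0 < x →
      x ^ 2 - c * x + a + b * Real.exp (-(x * (c * τ))) = 0 → x = lam₁) :
    ∀ lam : ℂ, lam ^ 2 - (c : ℂ) * lam + (a : ℂ) +
        (b : ℂ) * Complex.exp (-(lam * ((c : ℂ) * (τ : ℂ)))) = 0 →
      lam ≠ (lam₁ : ℂ) → lam.re < lam₁ := by
  intro lam hz hne
  by_contra hlt
  push_neg at hlt
  set x := lam.re with hxdef
  set y := lam.im with hydef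
  clear_value x y
  have hx : lam₁ ≤ x := hlt
  set E : ℝ := Real.exp (-(x * (c * τ))) with hEdef
  set E₁ : ℝ := Real.exp (-(lam₁ * (c * τ))) with hE₁def
  clear_value E E₁
  have hE : 0 < E := hEdef ▸ Real.exp_pos _
  have hE₁ : 0 < E₁ := hE₁def ▸ Real.exp_pos _
  have hb' : 0 < -b := by linarith
  have hcτ : 0 ≤ c * τ := mul_nonneg hc.le hτ
  have hEle : E ≤ E₁ := by
    rw [hEdef, hE₁def]
    apply Real.exp_le_exp.2
    nlinarith
  have hA₁ : lam₁ ^ 2 - c * lam₁ + a = -b * E₁ := by linarith [hzero]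
  have hA₁pos : 0 < lam₁ ^ 2 - c * lam₁ + a := by
    rw [hA₁]; exact mul_pos hb' hE₁
  have hl1c : c < lam₁ := by nlinarith
  set A : ℝ := x ^ 2 - c * x + a with hAdef
  clear_value A
  have hAlb : -b * E₁ ≤ A := by nlinarith
  have hApos : 0 < A := lt_of_lt_of_le (mul_pos hb' hE₁) hAlb
  have hBle : -b * E ≤ A := le_trans (by nlinarith) hAlb
  have heq : lam ^ 2 - (c : ℂ) * lam + (a : ℂ)
      = (-b : ℂ) * Complex.exp (-(lam * ((c : ℂ) * (τ : ℂ)))) := by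
    linear_combination hz
  have hre : (-(lam * ((c : ℂ) * (τ : ℂ)))).re = -(x * (c * τ)) := by
    simp [Complex.mul_re, hxdef, hydef]
  have habs : ‖lam ^ 2 - (c : ℂ) * lam + (a : ℂ)‖ = (-b) * E := by
    rw [heq, norm_mul, Complex.norm_exp, hre]
    rw [show (-(b:ℂ)) = ((-b : ℝ) : ℂ) by push_cast; ring, Complex.norm_real, Real.norm_eq_abs,
      abs_of_pos hb', hEdef]

  have hsq : Complex.normSq (lam ^ 2 - (c : ℂ) * lam + (a : ℂ)) = ((-b) * E) ^ 2 := by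
    rw [← Complex.sq_norm, habs]
  have hns : (x ^ 2 - y ^ 2 - c * x + a) ^ 2 + (2 * x * y - c * y) ^ 2
      = ((-b) * E) ^ 2 := by
    rw [← hsq]
    simp [Complex.normSq_apply, Complex.add_re, Complex.add_im, Complex.sub_re,
      Complex.sub_im, Complex.mul_re, Complex.mul_im, pow_two, hxdef, hydef]
    ring
  have key : A ^ 2 + y ^ 2 * (2 * A + y ^ 2 + c ^ 2 - 4 * a) = (-b) ^ 2 * E ^ 2 := by
    rw [hAdef]
    linear_combination hns
  clear hz heq hre habs hsq hns
  have hPpos : 0 < 2 * A + y ^ 2 + c ^ 2 - 4 * a := by linarith [sq_nonneg y, sq_nonneg c]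
  have hA2 : ((-b) * E) ^ 2 ≤ A ^ 2 :=
    pow_le_pow_left₀ (mul_pos hb' hE).le hBle 2
  have hy : y = 0 := by
    by_contra hyne
    have h1 : 0 < y ^ 2 := by positivity
    have h2 : 0 < y ^ 2 * (2 * A + y ^ 2 + c ^ 2 - 4 * a) := mul_pos h1 hPpos
    linarith [key, hA2]
  rw [hy] at key
  have key2 : A ^ 2 = ((-b) * E) ^ 2 := by linarith [key]
  have hAE : A = -b * E := by
    apply le_antisymm _ hBle
    nlinarith [key2, mul_pos hb' hE]
  have hfx : x ^ 2 - c * x + a + b * Real.exp (-(x * (c * τ))) = 0 := by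
    rw [← hEdef, show x ^ 2 - c * x + a = A from hAdef.symm]
    linarith [hAE]
  have hxpos : 0 < x := lt_of_lt_of_le hlam₁pos hx
  have hxe : x = lam₁ := huniq x hxpos hfx
  refine hne (Complex.ext ?_ ?_)
  · rw [← hxdef]; simpa using hxe
  · rw [← hydef]; simpa using hy
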